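/- Each elementary symmetric polynomial can be written in terms of power sums: e_n = Σ_{|λ|=n} ε_λ z_λ^{-1} p_λ, where the sum is over partitions λ of n, ε_λ = (-1)^{|λ|−ℓ(λ)}, z_λ = Π_{i≥1} i^{m_i} m_i!, m_i is the number of parts of λ equal to i, and p_λ = p_{λ_1}⋯p_{λ_ℓ}. -/

import Mathlib

open Multiset Finset

noncomputable def Zc (m : Multiset ℕ) : ℝ :=
  ∏ i ∈ m.toFinset, ((i : ℝ) ^ (m.count i) * (Nat.factorial (m.count i) : ℝ))

noncomputable def wgt (p : ℕ → ℝ) (m : Multiset ℕ) : ℝ :=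
  (-1 : ℝ) ^ (m.sum - Multiset.card m) * (Zc m)⁻¹ * (m.map p).prod

noncomputable def Spart (p : ℕ → ℝ) (n : ℕ) : ℝ :=
  ∑ π : Nat.Partition n, wgt p π.parts

lemma Zc_cons (k : ℕ) (m : Multiset ℕ) :
    Zc (k ::ₘ m) = ((k : ℝ) * ((m.count k : ℝ) + 1)) * Zc m := by
  classical
  have hk : k ∈ (k ::ₘ m).toFinset := by simp
  have hsub : m.toFinset ⊆ (k ::ₘ m).toFinset := by
    intro i hi; simp only [Multiset.mem_toFinset, Multiset.mem_cons] at *; tauto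
  have hZm : Zc m = ∏ i ∈ (k ::ₘ m).toFinset,
      ((i : ℝ) ^ (m.count i) * (Nat.factorial (m.count i) : ℝ)) := by
    rw [Zc]
    refine Finset.prod_subset hsub ?_
    intro i _ hi
    rw [Multiset.count_eq_zero_of_notMem (by simpa using hi)]
    simp
  rw [Zc, Finset.prod_eq_mul_prod_sdiff_singleton_of_mem hk, hZm,
    Finset.prod_eq_mul_prod_sdiff_singleton_of_mem hk]
  have hcount : ∀ i ∈ (k ::ₘ m).toFinset \ {k},
      ((i : ℝ) ^ ((k ::ₘ m).count i) * (Nat.factorial ((k ::ₘ m).count i) : ℝ))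
        = ((i : ℝ) ^ (m.count i) * (Nat.factorial (m.count i) : ℝ)) := by
    intro i hi
    have : i ≠ k := by simpa using (Finset.mem_sdiff.mp hi).2
    rw [Multiset.count_cons_of_ne this]
  rw [Finset.prod_congr rfl hcount, Multiset.count_cons_self]
  push_cast [pow_succ, Nat.factorial_succ]
  ring

lemma parts_toFinset_subset {n : ℕ} (π : Nat.Partition n) :
    π.parts.toFinset ⊆ Finset.Icc 1 n := by
  intro i hi
  rw [Multiset.mem_toFinset] at hi
  refine Finset.mem_Icc.mpr ⟨π.parts_pos hi, ?_⟩
  calc i ≤ π.parts.sum := Multiset.le_sum_of_mem hi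
  _ = n := π.parts_sum

lemma card_le_sum_parts {n : ℕ} (π : Nat.Partition n) :
    Multiset.card π.parts ≤ π.parts.sum := by
  simpa using Multiset.card_nsmul_le_sum (fun x hx => π.parts_pos hx)

lemma summand_eq_wgt (p : ℕ → ℝ) {n : ℕ} (π : Nat.Partition n) :
    (-1 : ℝ) ^ (n - Multiset.card π.parts)
      * (∏ i ∈ Finset.Icc 1 n,
          ((i : ℝ) ^ (Multiset.count i π.parts)
            * (Nat.factorial (Multiset.count i π.parts) : ℝ)))⁻¹
      * (π.parts.map p).prod = wgt p π.parts := by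
  have h : ∏ i ∈ Finset.Icc 1 n,
      ((i : ℝ) ^ (Multiset.count i π.parts)
        * (Nat.factorial (Multiset.count i π.parts) : ℝ)) = Zc π.parts := by
    rw [Zc]
    refine (Finset.prod_subset (parts_toFinset_subset π) ?_).symm
    intro i _ hi
    rw [Multiset.count_eq_zero_of_notMem (by simpa using hi)]
    simp
  rw [wgt, h, π.parts_sum]

lemma sum_count_parts (p : ℕ → ℝ) {n : ℕ} (π : Nat.Partition n) :
    ∑ k ∈ Finset.Icc 1 n, (k : ℝ) * (Multiset.count k π.parts) = n := by
  classical
  have h1 : ∑ k ∈ π.parts.toFinset, (k : ℝ) * (Multiset.count k π.parts) = n := by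
    have := Finset.sum_multiset_map_count π.parts (fun a => (a : ℝ))
    rw [← Nat.cast_multiset_sum, π.parts_sum] at this
    simp only [nsmul_eq_mul] at this
    rw [this]
    exact Finset.sum_congr rfl fun _ _ => mul_comm _ _
  rw [← h1]
  refine (Finset.sum_subset (parts_toFinset_subset π) ?_).symm
  intro i _ hi
  rw [Multiset.count_eq_zero_of_notMem (by simpa using hi)]
  simp

lemma S_zero (p : ℕ → ℝ) : Spart p 0 = 1 := by
  rw [Spart]
  rw [Finset.sum_eq_single_of_mem (default : Nat.Partition 0) (Finset.mem_univ _)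
    (fun b _ hb => absurd (Subsingleton.elim b default) hb)]
  have : (default : Nat.Partition 0).parts = 0 := rfl
  simp [wgt, this, Zc]

lemma S_rec (p : ℕ → ℝ) (n : ℕ) :
    ∑ k ∈ Finset.Icc 1 n, (-1 : ℝ) ^ (k - 1) * p k * Spart p (n - k)
      = (n : ℝ) * Spart p n := by
  classical
  have hRHS : (n : ℝ) * Spart p n
      = ∑ k ∈ Finset.Icc 1 n, ∑ π : Nat.Partition n,
          (k : ℝ) * (Multiset.count k π.parts) * wgt p π.parts := by
    rw [Finset.sum_comm, Spart, Finset.mul_sum]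
    refine Finset.sum_congr rfl fun π _ => ?_
    rw [← Finset.sum_mul]
    rw [sum_count_parts p π]
  rw [hRHS]
  refine Finset.sum_congr rfl fun k hk => ?_
  rw [Finset.mem_Icc] at hk
  obtain ⟨hk1, hkn⟩ := hk
  -- restrict RHS to partitions containing k
  rw [← Finset.sum_filter_of_ne (s := Finset.univ)
    (p := fun π : Nat.Partition n => k ∈ π.parts)
    (f := fun π : Nat.Partition n => (k : ℝ) * (Multiset.count k π.parts) * wgt p π.parts)
    (by
      intro π _ hπ
      by_contra hmem
      exact hπ (by simp [Multiset.count_eq_zero_of_notMem hmem]))]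
  rw [Spart, Finset.mul_sum]
  refine Finset.sum_bij'
    (i := fun (σ : Nat.Partition (n - k)) _ =>
      (⟨k ::ₘ σ.parts, fun {i} hi => by
          rcases Multiset.mem_cons.mp hi with h | h
          · omega
          · exact σ.parts_pos h,
        by rw [Multiset.sum_cons, σ.parts_sum]; omega⟩ : Nat.Partition n))
    (j := fun (π : Nat.Partition n) hπ =>
      (⟨π.parts.erase k, fun {i} hi => π.parts_pos (Multiset.mem_of_mem_erase hi),
        by
          have hkm : k ∈ π.parts := by simpa using hπ
          have := Multiset.sum_cons k (π.parts.erase k)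
          rw [Multiset.cons_erase hkm] at this
          have hsum := π.parts_sum
          omega⟩ : Nat.Partition (n - k)))
    ?_ ?_ ?_ ?_ ?_
  · intro σ _
    simp [Finset.mem_filter]
  · intro π _
    exact Finset.mem_univ _
  · intro σ _
    apply Nat.Partition.ext
    simp
  · intro π hπ
    apply Nat.Partition.ext
    simp only
    exact Multiset.cons_erase (by simpa using hπ)
  · intro σ _
    -- pointwise identity
    set m := σ.parts with hm
    have hmsum : m.sum = n - k := σ.parts_sum
    have hcard : Multiset.card m ≤ m.sum := card_le_sum_parts σ
    simp only [Multiset.count_cons_self]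
    rw [wgt, wgt, Zc_cons, Multiset.sum_cons, Multiset.map_cons, Multiset.prod_cons,
      Multiset.card_cons]
    have hsign : (-1 : ℝ) ^ (k - 1) * (-1 : ℝ) ^ (m.sum - Multiset.card m)
        = (-1 : ℝ) ^ (k + m.sum - (Multiset.card m + 1)) := by
      rw [← pow_add]
      congr 1
      omega
    have hne : ((k : ℝ) * ((m.count k : ℝ) + 1)) ≠ 0 := by
      have hk0 : (0 : ℝ) < (k : ℝ) := by exact_mod_cast hk1
      positivity
    rw [mul_inv, ← hsign]
    have cancel := mul_inv_cancel₀ hne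
    push_cast
    linear_combination (-((-1:ℝ)^(k-1) * (-1:ℝ)^(m.sum - Multiset.card m) * (Zc m)⁻¹
      * (p k * (Multiset.map p m).prod))) * cancel

noncomputable def Epoly (N : ℕ) (x : Fin N → ℝ) (n : ℕ) : ℝ :=
  ∑ s ∈ Finset.powersetCard n (Finset.univ : Finset (Fin N)), ∏ i ∈ s, x i

lemma E_rec (N : ℕ) (x : Fin N → ℝ) (p : ℕ → ℝ) (hp : ∀ k, p k = ∑ i : Fin N, x i ^ k)
    (n : ℕ) :
    (n : ℝ) * Epoly N x n
      = ∑ k ∈ Finset.Icc 1 n, (-1 : ℝ) ^ (k - 1) * p k * Epoly N x (n - k) := by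
  classical
  have hE : ∀ m, MvPolynomial.eval x (MvPolynomial.esymm (Fin N) ℝ m) = Epoly N x m := by
    intro m; rw [MvPolynomial.esymm, Epoly]; simp
  have hP : ∀ m, MvPolynomial.eval x (MvPolynomial.psum (Fin N) ℝ m) = p m := by
    intro m; rw [MvPolynomial.psum, hp]; simp
  have h := congrArg (MvPolynomial.eval x) (MvPolynomial.mul_esymm_eq_sum (Fin N) ℝ n)
  simp only [map_mul, map_sum, map_pow, map_neg, map_one, map_natCast, hE, hP] at h
  rw [h, Finset.mul_sum]
  refine Finset.sum_bij' (i := fun a _ => a.2) (j := fun k _ => (n - k, k)) ?_ ?_ ?_ ?_ ?_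
  · intro a ha
    rw [Finset.mem_filter, Finset.HasAntidiagonal.mem_antidiagonal] at ha
    show a.2 ∈ Finset.Icc 1 n
    rw [Finset.mem_Icc]
    omega
  · intro k hk
    rw [Finset.mem_Icc] at hk
    show (n - k, k) ∈ Finset.filter _ _
    rw [Finset.mem_filter, Finset.HasAntidiagonal.mem_antidiagonal]
    constructor
    · omega
    · show n - k < n; omega
  · intro a ha
    rw [Finset.mem_filter, Finset.HasAntidiagonal.mem_antidiagonal] at ha
    show (n - a.2, a.2) = a
    have : a.1 = n - a.2 := by omega
    exact Prod.ext this.symm rfl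
  · intro k _
    rfl
  · intro a ha
    rw [Finset.mem_filter, Finset.HasAntidiagonal.mem_antidiagonal] at ha
    show _ = (-1 : ℝ) ^ (a.2 - 1) * p a.2 * Epoly N x (n - a.2)
    have h1 : a.1 = n - a.2 := by omega
    rw [h1]
    rw [show (-1 : ℝ) ^ (n + 1) * ((-1 : ℝ) ^ (n - a.2) * Epoly N x (n - a.2) * p a.2)
        = (-1 : ℝ) ^ ((n + 1) + (n - a.2)) * Epoly N x (n - a.2) * p a.2 by
      rw [pow_add]; ring]
    rw [show (n + 1) + (n - a.2) = (a.2 - 1) + 2 * (n - a.2 + 1) by omega, pow_add, pow_mul]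
    simp; ring

/-- The elementary symmetric polynomial in terms of power sums:
`e_n = ∑_{|λ|=n} ε_λ z_λ⁻¹ p_λ`, the sum being over all partitions `λ` of `n`,
where `ε_λ = (-1)^(|λ|-ℓ(λ))`, `z_λ = ∏_{i≥1} i^{m_i} m_i!` with `m_i` the number
of parts of `λ` equal to `i`, and `p_λ = ∏ p_{λ_i}`. -/
theorem esymm_eq_sum_over_partitions (N n : ℕ) (x : Fin N → ℝ) (p : ℕ → ℝ)
    (hp : ∀ k, p k = ∑ i : Fin N, x i ^ k) :
    (∑ s ∈ Finset.powersetCard n (Finset.univ : Finset (Fin N)), ∏ i ∈ s, x i)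
      = ∑ π : Nat.Partition n,
          (-1 : ℝ) ^ (n - Multiset.card π.parts)
            * (∏ i ∈ Finset.Icc 1 n,
                ((i : ℝ) ^ (Multiset.count i π.parts)
                  * (Nat.factorial (Multiset.count i π.parts) : ℝ)))⁻¹
            * (π.parts.map p).prod := by
  have key : ∀ m : ℕ, Epoly N x m = Spart p m := by
    intro m
    induction m using Nat.strong_induction_on with
    | _ m ih =>
      rcases Nat.eq_zero_or_pos m with rfl | hm
      · rw [S_zero]
        simp [Epoly]
      · have h1 := E_rec N x p hp m
        rw [Finset.sum_congr rfl (fun k hk => by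
          rw [ih (m - k) (by have := Finset.mem_Icc.mp hk; omega)])] at h1
        exact mul_left_cancel₀ (by exact_mod_cast hm.ne')
          (h1.trans (S_rec p m))
  rw [show (∑ s ∈ Finset.powersetCard n (Finset.univ : Finset (Fin N)), ∏ i ∈ s, x i)
      = Epoly N x n from rfl, key n, Spart]
  exact Finset.sum_congr rfl fun π _ => (summand_eq_wgt p π).symm
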